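/- Let m ≥ 1 and let F be a field of characteristic zero. In the rational function field F(u), set v = (1+u)^{m+1} u^{−m}. Then the polynomial (1+U)^{m+1} − v·U^m ∈ F(u)[U] has no repeated root; equivalently, it is separable and has m+1 pairwise distinct roots in any splitting field over F(u). -/

import Mathlib

open Polynomial

lemma aux_sep (F : Type*) [Field F] [CharZero F] (m : ℕ) (hm : 1 ≤ m)
    (w : RatFunc F) (hv : w * RatFunc.X ^ m = (1 + RatFunc.X) ^ (m + 1)) :
    ((1 + X) ^ (m + 1) - C w * X ^ m : Polynomial (RatFunc F)).Separable := by
  have hkC : CharZero (RatFunc F) :=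
    charZero_of_injective_algebraMap (IsFractionRing.injective (Polynomial F) (RatFunc F))
  rw [separable_def]
  set K := AlgebraicClosure (RatFunc F) with hK
  have hinj : Function.Injective (algebraMap (RatFunc F) K) := (algebraMap (RatFunc F) K).injective
  have hKC : CharZero K := charZero_of_injective_algebraMap hinj
  rw [Polynomial.isCoprime_iff_aeval_ne_zero_of_isAlgClosed (RatFunc F) K]
  intro a
  by_contra hcon
  push_neg at hcon
  obtain ⟨h1, h2⟩ := hcon
  have hmK : ((m : K)) ≠ 0 := Nat.cast_ne_zero.2 (by omega)
  simp only [map_sub, map_mul, map_pow, map_add, map_one, aeval_X, aeval_C, sub_eq_zero] at h1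
  rw [derivative_sub, derivative_pow, derivative_mul, derivative_C, derivative_X_pow,
    derivative_add, derivative_one, derivative_X] at h2
  simp only [map_sub, map_mul, map_pow, map_add, map_one, aeval_X, aeval_C, map_natCast,
    zero_mul, zero_add, mul_one, Nat.add_sub_cancel, Nat.cast_add, Nat.cast_one,
    sub_eq_zero] at h2
  set W : K := algebraMap (RatFunc F) K w with hW
  have hXne : (RatFunc.X : RatFunc F) ≠ 0 := RatFunc.X_ne_zero
  have h1Xne : (1 + RatFunc.X : RatFunc F) ≠ 0 := by
    have hp : (1 + X : Polynomial F) ≠ 0 := by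
      intro h
      have := congrArg (Polynomial.eval 0) h
      simp at this
    have h : (algebraMap (Polynomial F) (RatFunc F)) (1 + X) ≠ 0 :=
      (map_ne_zero_iff _ (IsFractionRing.injective (Polynomial F) (RatFunc F))).mpr hp
    simpa [map_add, map_one, RatFunc.algebraMap_X] using h
  have hwne : w ≠ 0 := by
    intro h
    rw [h, zero_mul] at hv
    exact pow_ne_zero _ h1Xne hv.symm
  have hWne : W ≠ 0 := by simpa [hW, _root_.map_eq_zero] using hwne
  have hane : a ≠ 0 := by
    intro h
    rw [h] at h1
    simp [zero_pow (by omega : m ≠ 0)] at h1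
  have hAne : (1 + a) ≠ 0 := by
    intro h
    rw [h] at h1
    rw [zero_pow (by omega : m + 1 ≠ 0)] at h1
    exact (mul_ne_zero hWne (pow_ne_zero _ hane)) h1.symm
  -- derive a = m
  have key : a = (m : K) := by
    have hpow : a ^ (m - 1) * a = a ^ m := by
      rw [← pow_succ]; congr 1; omega
    have e3 : ((m : K) + 1) * (1 + a) ^ m * a = W * ((m : K) * a ^ (m - 1)) * a := by rw [h2]
    have e4 : W * ((m:K) * a ^ (m-1)) * a = (m:K) * ((1+a) * (1+a)^m) := by
      calc W * ((m:K) * a ^ (m-1)) * a = (m:K) * (W * (a ^ (m-1) * a)) := by ring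
        _ = (m:K) * (W * a ^ m) := by rw [hpow]
        _ = (m:K) * ((1+a)^(m+1)) := by rw [← h1]
        _ = (m:K) * ((1+a) * (1+a)^m) := by rw [pow_succ, mul_comm ((1+a)^m)]
    rw [e4] at e3
    have e5 : (1 + a) ^ m * (((m:K)+1) * a - (m:K) * (1 + a)) = 0 := by linear_combination e3
    have e6 := (mul_eq_zero.1 e5).resolve_left (pow_ne_zero _ hAne)
    linear_combination e6
  -- now contradiction
  rw [key] at h1
  -- map hv to K
  have hv' : W * (algebraMap (RatFunc F) K RatFunc.X) ^ m
      = (1 + algebraMap (RatFunc F) K RatFunc.X) ^ (m + 1) := by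
    have := congrArg (algebraMap (RatFunc F) K) hv
    simpa [map_mul, map_pow, map_add, map_one] using this
  set x : K := algebraMap (RatFunc F) K RatFunc.X with hx
  have big : (1 + x) ^ (m + 1) * (m : K) ^ m = x ^ m * (1 + (m : K)) ^ (m + 1) := by
    rw [← hv', h1]; ring
  -- pull back along ψ : F[X] →+* K
  set ψ : Polynomial F →+* K :=
    (algebraMap (RatFunc F) K).comp (algebraMap (Polynomial F) (RatFunc F)) with hψ
  have hψinj : Function.Injective ψ :=
    hinj.comp (IsFractionRing.injective (Polynomial F) (RatFunc F))
  have hψX : ψ X = x := by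
    rw [hψ, RingHom.comp_apply, RatFunc.algebraMap_X, hx]
  have big2 : ψ ((1 + X) ^ (m + 1) * (m : Polynomial F) ^ m)
      = ψ (X ^ m * (1 + (m : Polynomial F)) ^ (m + 1)) := by
    simp only [map_mul, map_pow, map_add, map_one, map_natCast, hψX]
    exact big
  have big3 := hψinj big2
  have := congrArg (Polynomial.eval 0) big3
  simp only [eval_mul, eval_pow, eval_add, eval_one, eval_X, eval_natCast,
    zero_pow (by omega : m ≠ 0), zero_mul, one_pow, one_mul, add_zero] at this
  exact pow_ne_zero m (Nat.cast_ne_zero.2 (by omega : m ≠ 0) : (m:F) ≠ 0) this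

theorem tamari_root_poly_separable (F : Type*) [Field F] [CharZero F] (m : ℕ) (hm : 1 ≤ m) :
    letI v : RatFunc F := (1 + RatFunc.X) ^ (m + 1) / RatFunc.X ^ m
    letI P : Polynomial (RatFunc F) := (1 + X) ^ (m + 1) - C v * X ^ m
    P.Separable ∧ (P.aroots P.SplittingField).card = m + 1 ∧
      (P.aroots P.SplittingField).Nodup := by
  set v : RatFunc F := (1 + RatFunc.X) ^ (m + 1) / RatFunc.X ^ m with hvdef
  set P : Polynomial (RatFunc F) := (1 + X) ^ (m + 1) - C v * X ^ m with hPdef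
  have hXne : (RatFunc.X : RatFunc F) ≠ 0 := RatFunc.X_ne_zero
  have hv : v * RatFunc.X ^ m = (1 + RatFunc.X) ^ (m + 1) :=
    div_mul_cancel₀ _ (pow_ne_zero _ hXne)
  have hsep : P.Separable := aux_sep F m hm v hv
  have h1Xne : (1 + RatFunc.X : RatFunc F) ≠ 0 := by
    have hp : (1 + X : Polynomial F) ≠ 0 := by
      intro h
      have := congrArg (Polynomial.eval 0) h
      simp at this
    have h : (algebraMap (Polynomial F) (RatFunc F)) (1 + X) ≠ 0 :=
      (map_ne_zero_iff _ (IsFractionRing.injective (Polynomial F) (RatFunc F))).mpr hp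
    simpa [map_add, map_one, RatFunc.algebraMap_X] using h
  have hvne : v ≠ 0 := by
    intro h
    rw [h, zero_mul] at hv
    exact pow_ne_zero _ h1Xne hv.symm
  have hdegP : P.degree = ((m + 1 : ℕ) : WithBot ℕ) := by
    have h1 : ((1 + X : (RatFunc F)[X]) ^ (m + 1)).degree = ((m + 1 : ℕ) : WithBot ℕ) := by
      have hE : (1 + X : (RatFunc F)[X]) = X + C 1 := by rw [map_one]; ring
      rw [hE, degree_pow, degree_X_add_C]
      simp
    have h2 : (C v * X ^ m : (RatFunc F)[X]).degree < ((m + 1 : ℕ) : WithBot ℕ) := by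
      rw [degree_C_mul_X_pow m hvne]
      exact_mod_cast Nat.lt_succ_self m
    rw [← h1] at h2
    rw [hPdef, degree_sub_eq_left_of_degree_lt h2, h1]
  have hnd : P.natDegree = m + 1 := natDegree_eq_of_degree_eq_some hdegP
  have hcard : (P.aroots P.SplittingField).card = m + 1 := by
    rw [aroots_def]
    rw [← hnd]
    rw [← natDegree_map (algebraMap (RatFunc F) P.SplittingField)]
    exact (SplittingField.splits P).natDegree_eq_card_roots.symm
  exact ⟨hsep, hcard, nodup_roots (hsep.map)⟩
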